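/- Let G be a group and H an infinite virtually cyclic subgroup. Define an equivalence relation on infinite virtually cyclic subgroups by K ~ L iff K ∩ L is infinite (commensurability). Suppose the commensurator Comm_G(H) = {g ∈ G : H ∩ gHg⁻¹ is infinite} is itself virtually cyclic. Then Comm_G(H) is the unique maximal virtually cyclic subgroup of G containing H, and it equals its own normalizer in G. -/

import Mathlib

open Subgroup Pointwise

/-- A subgroup is virtually cyclic if it contains a cyclic subgroup of finite
index. -/
def VirtuallyCyclic {G : Type*} [Group G] (H : Subgroup G) : Prop :=
  ∃ K : Subgroup G, K ≤ H ∧ IsCyclic K ∧ K.relIndex H ≠ 0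

lemma int_index_ne_zero (T : AddSubgroup ℤ) (h : Infinite T) : T.index ≠ 0 := by
  obtain ⟨a, rfl⟩ := Int.subgroup_cyclic T
  rw [← AddSubgroup.zmultiples_eq_closure] at *
  rw [Int.index_zmultiples]
  intro hz
  rw [Int.natAbs_eq_zero] at hz
  subst hz
  exact (not_infinite_iff_finite.mpr (by
    have : (AddSubgroup.zmultiples (0:ℤ)) = ⊥ := by simp
    rw [this]; infer_instance)) h

lemma cyclic_index_ne_zero {X : Type*} [Group X] [IsCyclic X] (T : Subgroup X)
    (h : Infinite T) : T.index ≠ 0 := by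
  cases finite_or_infinite X with
  | inl _ =>
    have : Finite (X ⧸ T) := Quotient.finite _
    exact Subgroup.index_ne_zero_of_finite
  | inr hX =>
    have h0 : Nat.card X = 0 := Nat.card_eq_zero_of_infinite
    have e0 := zmodCyclicMulEquiv (inferInstance : IsCyclic X)
    rw [h0] at e0
    have e : Multiplicative ℤ ≃* X := e0
    have hcom : T.comap e.toMonoidHom = T.map e.symm.toMonoidHom := by
      ext x
      simp [Subgroup.mem_map, Subgroup.mem_comap]
      constructor
      · intro hx; exact ⟨e x, hx, by simp⟩
      · rintro ⟨y, hy, rfl⟩; simpa using hy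
    have hinf' : Infinite (T.comap e.toMonoidHom) := by
      rw [hcom]
      exact Infinite.of_injective (fun a : T => ((e.symm.subgroupMap T) a : T.map e.symm.toMonoidHom))
        (fun a b hab => (e.symm.subgroupMap T).injective hab)
    have := int_index_ne_zero (Subgroup.toAddSubgroup (T.comap e.toMonoidHom))
      (Infinite.of_injective (fun a : T.comap e.toMonoidHom =>
          (⟨a.1, a.2⟩ : Subgroup.toAddSubgroup (T.comap e.toMonoidHom)))
        (fun a b hab => Subtype.ext (congrArg Subtype.val hab)))
    erw [Subgroup.index_toAddSubgroup] at this
    rw [Subgroup.index_comap_of_surjective T (f := e.toMonoidHom) e.surjective] at this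
    exact this

/-- An infinite subgroup of a virtually cyclic subgroup has finite relative index. -/
lemma relIndex_ne_zero_of_infinite {G : Type*} [Group G] {S K : Subgroup G}
    (hSK : S ≤ K) (hS : Infinite S) (hK : VirtuallyCyclic K) : S.relIndex K ≠ 0 := by
  obtain ⟨C, hCK, hCcyc, hCrel⟩ := hK
  have h1 : C.relIndex S ≠ 0 :=
    fun h0 => hCrel (Subgroup.relIndex_eq_zero_of_le_right hSK h0)
  have h2 : (S ⊓ C).relIndex S ≠ 0 := by rwa [Subgroup.inf_relIndex_left]
  -- S ⊓ C is infinite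
  have hScard : Nat.card S = 0 := Nat.card_eq_zero_of_infinite
  have hinfSC : Infinite (S ⊓ C : Subgroup G) := by
    have hmul := Subgroup.card_mul_index ((S ⊓ C).subgroupOf S)
    rw [hScard] at hmul
    have hcard0 : Nat.card ((S ⊓ C).subgroupOf S) = 0 := by
      rcases Nat.mul_eq_zero.mp hmul with h | h
      · exact h
      · exact absurd h h2
    have : Infinite ((S ⊓ C).subgroupOf S) := by
      rcases Nat.card_eq_zero.mp hcard0 with h | h
      · exact h.elim 1
      · exact h
    exact Infinite.of_injective (fun a : (S ⊓ C).subgroupOf S =>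
        (Subgroup.subgroupOfEquivOfLe (inf_le_left : S ⊓ C ≤ S) a : (S ⊓ C : Subgroup G)))
      (fun a b hab => (Subgroup.subgroupOfEquivOfLe inf_le_left).injective hab)
  -- so S ⊓ C has finite index in C (cyclic)
  haveI := hCcyc
  have h3 : (S ⊓ C).relIndex C ≠ 0 := by
    have : Infinite ((S ⊓ C).subgroupOf C) :=
      Infinite.of_injective (fun a : (S ⊓ C : Subgroup G) =>
          ((Subgroup.subgroupOfEquivOfLe (inf_le_right : S ⊓ C ≤ C)).symm a))
        (fun a b hab => (Subgroup.subgroupOfEquivOfLe inf_le_right).symm.injective hab)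
    exact cyclic_index_ne_zero ((S ⊓ C).subgroupOf C) this
  have h4 : (S ⊓ C).relIndex K ≠ 0 := by
    rw [← Subgroup.relIndex_mul_relIndex (S ⊓ C) C K inf_le_right hCK]
    exact Nat.mul_ne_zero h3 hCrel
  have h5 : S.relIndex K ∣ (S ⊓ C).relIndex K := Subgroup.relIndex_dvd_of_le_left K inf_le_left
  intro h0
  rcases h5 with ⟨c, hc⟩
  exact h4 (by rw [hc, h0, Nat.zero_mul])

lemma relIndex_ne_zero_of_infinite' {G : Type*} [Group G] {S K : Subgroup G}
    (hSK : S ≤ K) (hS : Infinite S) (hK : VirtuallyCyclic K) : S.relIndex K ≠ 0 :=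
  relIndex_ne_zero_of_infinite hSK hS hK

lemma commensurable_of_relIndex {G : Type*} [Group G] {A B K : Subgroup G}
    (hAK : A ≤ K) (hBK : B ≤ K) (hA : A.relIndex K ≠ 0) (hB : B.relIndex K ≠ 0) :
    Commensurable A B :=
  ⟨Subgroup.relIndex_ne_zero_trans hA (by rw [Subgroup.relIndex_eq_one.mpr hBK]; exact one_ne_zero),
   Subgroup.relIndex_ne_zero_trans hB (by rw [Subgroup.relIndex_eq_one.mpr hAK]; exact one_ne_zero)⟩

lemma conjAct_smul_eq_of_mem_normalizer {G : Type*} [Group G] {S : Subgroup G} {g : G}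
    (hg : g ∈ Subgroup.normalizer (S : Set G)) : ConjAct.toConjAct g • S = S := by
  ext x
  rw [Subgroup.mem_pointwise_smul_iff_inv_smul_mem]
  rw [Subgroup.mem_normalizer_iff] at hg
  have hs : (ConjAct.toConjAct g)⁻¹ • x = g⁻¹ * x * g := by
    rw [← ConjAct.toConjAct_inv, ConjAct.toConjAct_smul]; group
  rw [hs]
  have key := hg (g⁻¹ * x * g)
  have hx : g * (g⁻¹ * x * g) * g⁻¹ = x := by group
  rw [hx] at key
  exact key

lemma conjAct_smul_le_of_le {G : Type*} [Group G] {S K : Subgroup G} {g : G} (h : S ≤ K)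
    (hgK : g ∈ K) : ConjAct.toConjAct g • S ≤ K := by
  intro x hx
  rw [Subgroup.mem_pointwise_smul_iff_inv_smul_mem] at hx
  have hs : (ConjAct.toConjAct g)⁻¹ • x = g⁻¹ * x * g := by
    rw [← ConjAct.toConjAct_inv, ConjAct.toConjAct_smul]; group
  rw [hs] at hx
  have hm := K.mul_mem (K.mul_mem hgK (h hx)) (K.inv_mem hgK)
  have e : g * (g⁻¹ * x * g) * g⁻¹ = x := by group
  rwa [e] at hm

lemma conjAct_smul_infinite {G : Type*} [Group G] (S : Subgroup G) (g : G) [Infinite S] :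
    Infinite (ConjAct.toConjAct g • S : Subgroup G) :=
  Infinite.of_injective
    (fun a : S => ((Subgroup.equivSMul (ConjAct.toConjAct g) S) a :
      (ConjAct.toConjAct g • S : Subgroup G)))
    fun a b hab => (Subgroup.equivSMul _ S).injective hab

/-- If `H` is an infinite virtually cyclic subgroup of `G` whose commensurator
is itself virtually cyclic, then the commensurator is the unique maximal
virtually cyclic subgroup of `G` containing `H`, and it equals its own
normalizer. -/
theorem stmt12 (G : Type*) [Group G] (H : Subgroup G)
    (hinf : Infinite H) (hvc : VirtuallyCyclic H)
    (hcvc : VirtuallyCyclic (Subgroup.Commensurable.commensurator H)) :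
    H ≤ Subgroup.Commensurable.commensurator H ∧
      (∀ K : Subgroup G, VirtuallyCyclic K → H ≤ K →
        K ≤ Subgroup.Commensurable.commensurator H) ∧
      Subgroup.normalizer (Subgroup.Commensurable.commensurator H : Set G) =
        Subgroup.Commensurable.commensurator H := by
  have claim2 : ∀ K : Subgroup G, VirtuallyCyclic K → H ≤ K →
      K ≤ Commensurable.commensurator H := by
    intro K hKvc hHK g hg
    rw [Commensurable.commensurator_mem_iff]
    have hA : ConjAct.toConjAct g • H ≤ K := conjAct_smul_le_of_le hHK hg
    have hAinf : Infinite (ConjAct.toConjAct g • H : Subgroup G) := conjAct_smul_infinite H g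
    exact commensurable_of_relIndex hA hHK
      (relIndex_ne_zero_of_infinite hA hAinf hKvc)
      (relIndex_ne_zero_of_infinite hHK hinf hKvc)
  have claim1 : H ≤ Commensurable.commensurator H := by
    intro g hg
    rw [Commensurable.commensurator_mem_iff,
      conjAct_smul_eq_of_mem_normalizer (Subgroup.le_normalizer hg)]
  refine ⟨claim1, claim2, le_antisymm ?_ Subgroup.le_normalizer⟩
  intro g hg
  rw [Commensurable.commensurator_mem_iff]
  have hNg := conjAct_smul_eq_of_mem_normalizer hg
  have hAle : ConjAct.toConjAct g • H ≤ Commensurable.commensurator H := by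
    refine le_trans ?_ (le_of_eq hNg)
    exact Subgroup.pointwise_smul_le_pointwise_smul_iff.mpr claim1
  have hAinf : Infinite (ConjAct.toConjAct g • H : Subgroup G) := conjAct_smul_infinite H g
  exact commensurable_of_relIndex hAle claim1
    (relIndex_ne_zero_of_infinite hAle hAinf hcvc)
    (relIndex_ne_zero_of_infinite claim1 hinf hcvc)
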